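/- arXiv:1003.3910 — 3 statements merged into one kernel-verified Lean document; each statement's English description precedes it below -/
import Mathlib

section
/- (Hexagon duality.) For all positive reals x, y, z, setting A = θ(x,y,z), B = θ(y,z,x), C = θ(z,x,y) (the lengths of the three remaining sides of the right-angled hexagon with non-adjacent side lengths x, y, z), one has x = θ(A,B,C), y = θ(B,C,A) and z = θ(C,A,B); equivalently, cosh x = (cosh A + cosh B · cosh C)/(sinh B · sinh C) and cyclically. -/
open Real Filter Set

/-- Inverse hyperbolic cosine. -/
noncomputable def arcosh (x : ℝ) : ℝ := Real.log (x + Real.sqrt (x ^ 2 - 1))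

/-- The length of the side of a right-angled hyperbolic hexagon opposite the side of
length `x`, where the three pairwise non-adjacent sides have lengths `x, y, z`. -/
noncomputable def theta (x y z : ℝ) : ℝ :=
  _root_.arcosh ((Real.cosh x + Real.cosh y * Real.cosh z) / (Real.sinh y * Real.sinh z))

lemma inv_aux {u : ℝ} (h : 1 ≤ u) :
    (u + Real.sqrt (u ^ 2 - 1))⁻¹ = u - Real.sqrt (u ^ 2 - 1) := by
  have hs0 : 0 ≤ Real.sqrt (u ^ 2 - 1) := Real.sqrt_nonneg _
  have hs : Real.sqrt (u ^ 2 - 1) ^ 2 = u ^ 2 - 1 := Real.sq_sqrt (by nlinarith)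
  have hpos : (0:ℝ) < u + Real.sqrt (u ^ 2 - 1) := by linarith
  exact inv_eq_of_mul_eq_one_right (by nlinarith)

lemma cosh_arcosh {u : ℝ} (h : 1 ≤ u) : Real.cosh (_root_.arcosh u) = u := by
  have hs0 : 0 ≤ Real.sqrt (u ^ 2 - 1) := Real.sqrt_nonneg _
  have hpos : (0:ℝ) < u + Real.sqrt (u ^ 2 - 1) := by linarith
  rw [_root_.arcosh, Real.cosh_eq, Real.exp_log hpos, Real.exp_neg, Real.exp_log hpos,
    inv_aux h]
  ring

lemma sinh_arcosh {u : ℝ} (h : 1 ≤ u) :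
    Real.sinh (_root_.arcosh u) = Real.sqrt (u ^ 2 - 1) := by
  have hs0 : 0 ≤ Real.sqrt (u ^ 2 - 1) := Real.sqrt_nonneg _
  have hpos : (0:ℝ) < u + Real.sqrt (u ^ 2 - 1) := by linarith
  rw [_root_.arcosh, Real.sinh_eq, Real.exp_log hpos, Real.exp_neg, Real.exp_log hpos,
    inv_aux h]
  ring

lemma arcosh_cosh {x : ℝ} (h : 0 ≤ x) : _root_.arcosh (Real.cosh x) = x := by
  have h1 : Real.cosh x ^ 2 - 1 = Real.sinh x ^ 2 := by
    have := Real.cosh_sq_sub_sinh_sq x; nlinarith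
  have h2 : 0 ≤ Real.sinh x := by simpa using Real.sinh_le_sinh.mpr h
  rw [_root_.arcosh, h1, Real.sqrt_sq h2, Real.cosh_add_sinh, Real.log_exp]

lemma theta_spec (x y z : ℝ) (hx : 0 < x) (hy : 0 < y) (hz : 0 < z) :
    Real.cosh (theta x y z)
      = (Real.cosh x + Real.cosh y * Real.cosh z) / (Real.sinh y * Real.sinh z) ∧
    Real.sinh (theta x y z)
      = Real.sqrt (Real.cosh x ^ 2 + Real.cosh y ^ 2 + Real.cosh z ^ 2
          + 2 * Real.cosh x * Real.cosh y * Real.cosh z - 1)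
        / (Real.sinh y * Real.sinh z) := by
  have ha : 1 < Real.cosh x := Real.one_lt_cosh.mpr hx.ne'
  have hb : 1 < Real.cosh y := Real.one_lt_cosh.mpr hy.ne'
  have hc : 1 < Real.cosh z := Real.one_lt_cosh.mpr hz.ne'
  have hsy : Real.sinh y ^ 2 = Real.cosh y ^ 2 - 1 := by
    have := Real.cosh_sq_sub_sinh_sq y; linarith
  have hsz : Real.sinh z ^ 2 = Real.cosh z ^ 2 - 1 := by
    have := Real.cosh_sq_sub_sinh_sq z; linarith
  have hsy0 : 0 < Real.sinh y := Real.sinh_pos_iff.mpr hy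
  have hsz0 : 0 < Real.sinh z := Real.sinh_pos_iff.mpr hz
  have hylt : Real.sinh y < Real.cosh y := by nlinarith
  have hzlt : Real.sinh z < Real.cosh z := by nlinarith
  have hu : 1 ≤ (Real.cosh x + Real.cosh y * Real.cosh z) / (Real.sinh y * Real.sinh z) := by
    rw [le_div_iff₀ (by positivity)]
    nlinarith [mul_lt_mul'' hylt hzlt hsy0.le hsz0.le]
  have hD : (0:ℝ) ≤ Real.cosh x ^ 2 + Real.cosh y ^ 2 + Real.cosh z ^ 2
      + 2 * Real.cosh x * Real.cosh y * Real.cosh z - 1 := by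
    nlinarith [mul_pos (mul_pos (lt_trans one_pos ha) (lt_trans one_pos hb)) (lt_trans one_pos hc)]
  constructor
  · exact _root_.cosh_arcosh hu
  · rw [theta, _root_.sinh_arcosh hu]
    rw [show ((Real.cosh x + Real.cosh y * Real.cosh z) / (Real.sinh y * Real.sinh z)) ^ 2 - 1
        = (Real.cosh x ^ 2 + Real.cosh y ^ 2 + Real.cosh z ^ 2
          + 2 * Real.cosh x * Real.cosh y * Real.cosh z - 1) / (Real.sinh y * Real.sinh z) ^ 2 by
      field_simp
      linear_combination (Real.cosh z ^ 2 - 1) * hsy + Real.sinh y ^ 2 * hsz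
        + (-2 * Real.sinh z ^ 2) * hsy + (-2 * (Real.cosh y ^ 2 - 1)) * hsz]
    rw [Real.sqrt_div hD, Real.sqrt_sq (by positivity)]

lemma key (x y z : ℝ) (hx : 0 < x) (hy : 0 < y) (hz : 0 < z) :
    Real.cosh x = (Real.cosh (theta x y z)
        + Real.cosh (theta y z x) * Real.cosh (theta z x y))
      / (Real.sinh (theta y z x) * Real.sinh (theta z x y)) := by
  obtain ⟨cA, -⟩ := theta_spec x y z hx hy hz
  obtain ⟨cB, sB⟩ := theta_spec y z x hy hz hx
  obtain ⟨cC, sC⟩ := theta_spec z x y hz hx hy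
  have ha : 1 < Real.cosh x := Real.one_lt_cosh.mpr hx.ne'
  have hb : 1 < Real.cosh y := Real.one_lt_cosh.mpr hy.ne'
  have hc : 1 < Real.cosh z := Real.one_lt_cosh.mpr hz.ne'
  have hsx : Real.sinh x ^ 2 = Real.cosh x ^ 2 - 1 := by
    have := Real.cosh_sq_sub_sinh_sq x; linarith
  have hsy : Real.sinh y ^ 2 = Real.cosh y ^ 2 - 1 := by
    have := Real.cosh_sq_sub_sinh_sq y; linarith
  have hsz : Real.sinh z ^ 2 = Real.cosh z ^ 2 - 1 := by
    have := Real.cosh_sq_sub_sinh_sq z; linarith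
  have hsx0 : 0 < Real.sinh x := Real.sinh_pos_iff.mpr hx
  have hsy0 : 0 < Real.sinh y := Real.sinh_pos_iff.mpr hy
  have hsz0 : 0 < Real.sinh z := Real.sinh_pos_iff.mpr hz
  have hD0 : (0:ℝ) < Real.cosh x ^ 2 + Real.cosh y ^ 2 + Real.cosh z ^ 2
      + 2 * Real.cosh x * Real.cosh y * Real.cosh z - 1 := by
    nlinarith [mul_pos (mul_pos (lt_trans one_pos ha) (lt_trans one_pos hb)) (lt_trans one_pos hc)]
  rw [cA, cB, cC, sB, sC,
    show Real.cosh y ^ 2 + Real.cosh z ^ 2 + Real.cosh x ^ 2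
      + 2 * Real.cosh y * Real.cosh z * Real.cosh x - 1
      = Real.cosh x ^ 2 + Real.cosh y ^ 2 + Real.cosh z ^ 2
      + 2 * Real.cosh x * Real.cosh y * Real.cosh z - 1 by ring,
    show Real.cosh z ^ 2 + Real.cosh x ^ 2 + Real.cosh y ^ 2
      + 2 * Real.cosh z * Real.cosh x * Real.cosh y - 1
      = Real.cosh x ^ 2 + Real.cosh y ^ 2 + Real.cosh z ^ 2
      + 2 * Real.cosh x * Real.cosh y * Real.cosh z - 1 by ring]
  set a := Real.cosh x
  set b := Real.cosh y
  set c := Real.cosh z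
  set sx := Real.sinh x
  set sy := Real.sinh y
  set sz := Real.sinh z
  set D := a ^ 2 + b ^ 2 + c ^ 2 + 2 * a * b * c - 1 with hDdef
  have e1 : Real.sqrt D / (sz * sx) * (Real.sqrt D / (sx * sy))
      = D / (sx ^ 2 * (sy * sz)) := by
    rw [div_mul_div_comm, Real.mul_self_sqrt hD0.le]
    ring
  have num : (a + b * c) * sx ^ 2 + (b + c * a) * (c + a * b) = a * D := by
    linear_combination (a + b * c) * hsx
  have e2 : (a + b * c) / (sy * sz) + (b + c * a) / (sz * sx) * ((c + a * b) / (sx * sy))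
      = a * D / (sx ^ 2 * (sy * sz)) := by
    rw [← num]
    field_simp
  rw [e1, e2, div_div_div_cancel_right₀]
  · rw [mul_div_assoc, div_self hD0.ne', mul_one]
  · have : sx ≠ 0 := hsx0.ne'
    positivity

/-- hexagon duality: for positive `x, y, z`, with
`A = θ(x,y,z)`, `B = θ(y,z,x)`, `C = θ(z,x,y)`, one has `x = θ(A,B,C)`,
`y = θ(B,C,A)`, `z = θ(C,A,B)`; equivalently
`cosh x = (cosh A + cosh B · cosh C)/(sinh B · sinh C)` and cyclically. -/
theorem stmt_1 (x y z : ℝ) (hx : 0 < x) (hy : 0 < y) (hz : 0 < z) :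
    x = theta (theta x y z) (theta y z x) (theta z x y) ∧
    y = theta (theta y z x) (theta z x y) (theta x y z) ∧
    z = theta (theta z x y) (theta x y z) (theta y z x) ∧
    Real.cosh x = (Real.cosh (theta x y z)
        + Real.cosh (theta y z x) * Real.cosh (theta z x y))
      / (Real.sinh (theta y z x) * Real.sinh (theta z x y)) ∧
    Real.cosh y = (Real.cosh (theta y z x)
        + Real.cosh (theta z x y) * Real.cosh (theta x y z))
      / (Real.sinh (theta z x y) * Real.sinh (theta x y z)) ∧
    Real.cosh z = (Real.cosh (theta z x y)
        + Real.cosh (theta x y z) * Real.cosh (theta y z x))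
      / (Real.sinh (theta x y z) * Real.sinh (theta y z x)) := by
  have hA := key x y z hx hy hz
  have hB := key y z x hy hz hx
  have hC := key z x y hz hx hy
  refine ⟨?_, ?_, ?_, hA, hB, hC⟩
  · conv_lhs => rw [← _root_.arcosh_cosh hx.le, hA]
    rfl
  · conv_lhs => rw [← _root_.arcosh_cosh hy.le, hB]
    rfl
  · conv_lhs => rw [← _root_.arcosh_cosh hz.le, hC]
    rfl
end

section
/- (Lemma 2.3.) At every point of W^{ijk}, the Jacobian matrix of the map (w_i,w_j,w_k) ↦ (θ^i_jk, θ^j_ki, θ^k_ij) is symmetric; that is, ∂θ^i_jk/∂w_j = ∂θ^j_ki/∂w_i, ∂θ^j_ki/∂w_k = ∂θ^k_ij/∂w_j, and ∂θ^k_ij/∂w_i = ∂θ^i_jk/∂w_k. -/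
open Real Filter Set

/-- The conformally deformed edge length `l` with `cosh (l/2) = e^s · cosh (c/2)`,
where `c` is the original edge length and `s` is the sum of the two conformal
factors at the ends of the edge. -/
noncomputable def hexLen (c s : ℝ) : ℝ := 2 * _root_.arcosh (Real.exp s * Real.cosh (c / 2))

/-- The space `W^{ijk}` of conformal factors `p = (w_i, w_j, w_k)` for which the three
deformed edge lengths `l_jk, l_ki, l_ij` are defined and positive; here
`a = l⁰_jk`, `b = l⁰_ki`, `c = l⁰_ij`. -/
def Wijk (a b c : ℝ) : Set (ℝ × ℝ × ℝ) :=
  {p | 1 < Real.exp (p.2.1 + p.2.2) * Real.cosh (a / 2) ∧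
       1 < Real.exp (p.2.2 + p.1) * Real.cosh (b / 2) ∧
       1 < Real.exp (p.1 + p.2.1) * Real.cosh (c / 2)}

/-- `θ^i_jk` as a function of `p = (w_i, w_j, w_k)`, where `a = l⁰_jk`, `b = l⁰_ki`,
`c = l⁰_ij`: the boundary arc opposite the deformed edge `l_jk`. -/
noncomputable def thetaI (a b c : ℝ) (p : ℝ × ℝ × ℝ) : ℝ :=
  theta (hexLen a (p.2.1 + p.2.2)) (hexLen b (p.2.2 + p.1)) (hexLen c (p.1 + p.2.1))

/-- `θ^j_ki` as a function of `p = (w_i, w_j, w_k)`. -/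
noncomputable def thetaJ (a b c : ℝ) (p : ℝ × ℝ × ℝ) : ℝ :=
  theta (hexLen b (p.2.2 + p.1)) (hexLen c (p.1 + p.2.1)) (hexLen a (p.2.1 + p.2.2))

/-- `θ^k_ij` as a function of `p = (w_i, w_j, w_k)`. -/
noncomputable def thetaK (a b c : ℝ) (p : ℝ × ℝ × ℝ) : ℝ :=
  theta (hexLen c (p.1 + p.2.1)) (hexLen a (p.2.1 + p.2.2)) (hexLen b (p.2.2 + p.1))

/-- The Jacobian matrix `∂(θ^i_jk, θ^j_ki, θ^k_ij)/∂(w_i, w_j, w_k)` at `p`. -/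
noncomputable def Jac (a b c : ℝ) (p : ℝ × ℝ × ℝ) : Matrix (Fin 3) (Fin 3) ℝ :=
  fun r s =>
    fderiv ℝ (![thetaI a b c, thetaJ a b c, thetaK a b c] r) p
      (![((1:ℝ),(0:ℝ),(0:ℝ)), ((0:ℝ),(1:ℝ),(0:ℝ)), ((0:ℝ),(0:ℝ),(1:ℝ))] s)

namespace Stmt4Aux


lemma v_pos {t : ℝ} (h : 1 ≤ t) : 0 < t + Real.sqrt (t ^ 2 - 1) := by
  have := Real.sqrt_nonneg (t ^ 2 - 1); linarith

lemma sq_sqrt' {t : ℝ} (h : 1 ≤ t) : (Real.sqrt (t ^ 2 - 1)) ^ 2 = t ^ 2 - 1 :=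
  Real.sq_sqrt (by nlinarith)

lemma cosh_arcosh {t : ℝ} (h : 1 ≤ t) : Real.cosh (_root_.arcosh t) = t := by
  have hv := v_pos h
  rw [_root_.arcosh, Real.cosh_eq, Real.exp_log hv, Real.exp_neg, Real.exp_log hv]
  field_simp
  nlinarith [sq_sqrt' h]

lemma sinh_arcosh {t : ℝ} (h : 1 ≤ t) : Real.sinh (_root_.arcosh t) = Real.sqrt (t ^ 2 - 1) := by
  have hv := v_pos h
  rw [_root_.arcosh, Real.sinh_eq, Real.exp_log hv, Real.exp_neg, Real.exp_log hv]
  field_simp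
  nlinarith [sq_sqrt' h]

lemma arcosh_pos {t : ℝ} (h : 1 < t) : 0 < _root_.arcosh t := by
  have := Real.sqrt_nonneg (t ^ 2 - 1)
  exact Real.log_pos (by linarith)

lemma hasDerivAt_arcosh {t : ℝ} (h : 1 < t) :
    HasDerivAt _root_.arcosh (Real.sqrt (t ^ 2 - 1))⁻¹ t := by
  have hs : 0 < t ^ 2 - 1 := by nlinarith
  have hsq : 0 < Real.sqrt (t ^ 2 - 1) := Real.sqrt_pos.2 hs
  have h1 : HasDerivAt (fun x : ℝ => x ^ 2 - 1) (2 * t) t := by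
    simpa using (hasDerivAt_pow 2 t).sub_const 1
  have h2 : HasDerivAt (fun x : ℝ => Real.sqrt (x ^ 2 - 1))
      (1 / (2 * Real.sqrt (t ^ 2 - 1)) * (2 * t)) t :=
    (Real.hasDerivAt_sqrt hs.ne').comp t h1
  have h3 : HasDerivAt (fun x : ℝ => x + Real.sqrt (x ^ 2 - 1))
      (1 + 1 / (2 * Real.sqrt (t ^ 2 - 1)) * (2 * t)) t := (hasDerivAt_id t).add h2
  have hv := v_pos h.le
  have h4 := h3.log hv.ne'
  refine h4.congr_deriv ?_
  have h5 : Real.sqrt (t ^ 2 - 1) ^ 2 = t ^ 2 - 1 := sq_sqrt' h.le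
  field_simp
  nlinarith [h5]



lemma hexLen_pos {c s : ℝ} (h : 1 < Real.exp s * Real.cosh (c / 2)) : 0 < hexLen c s := by
  have := arcosh_pos h; rw [hexLen]; linarith

lemma cosh_hexLen {c s : ℝ} (h : 1 < Real.exp s * Real.cosh (c / 2)) :
    Real.cosh (hexLen c s) = 2 * (Real.exp s * Real.cosh (c / 2)) ^ 2 - 1 := by
  rw [hexLen, Real.cosh_two_mul, cosh_arcosh h.le, sinh_arcosh h.le,
    Real.sq_sqrt (by nlinarith)]
  ring

lemma sinh_hexLen {c s : ℝ} (h : 1 < Real.exp s * Real.cosh (c / 2)) :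
    Real.sinh (hexLen c s) = 2 * (Real.exp s * Real.cosh (c / 2)) *
      Real.sqrt ((Real.exp s * Real.cosh (c / 2)) ^ 2 - 1) := by
  rw [hexLen, Real.sinh_two_mul, cosh_arcosh h.le, sinh_arcosh h.le]
  ring

lemma hasDerivAt_hexLen {c s : ℝ} (h : 1 < Real.exp s * Real.cosh (c / 2)) :
    HasDerivAt (hexLen c)
      (2 * (Real.exp s * Real.cosh (c / 2)) /
        Real.sqrt ((Real.exp s * Real.cosh (c / 2)) ^ 2 - 1)) s := by
  have h1 : HasDerivAt (fun t : ℝ => Real.exp t * Real.cosh (c / 2))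
      (Real.exp s * Real.cosh (c / 2)) s := (Real.hasDerivAt_exp s).mul_const _
  have h2 := ((hasDerivAt_arcosh h).comp s h1).const_mul 2
  refine h2.congr_deriv ?_
  rw [div_eq_mul_inv]; ring

lemma hex_key {c s : ℝ} (h : 1 < Real.exp s * Real.cosh (c / 2)) :
    Real.sinh (hexLen c s) * (2 * (Real.exp s * Real.cosh (c / 2)) /
        Real.sqrt ((Real.exp s * Real.cosh (c / 2)) ^ 2 - 1)) =
      2 * (Real.cosh (hexLen c s) + 1) := by
  have hs : (0:ℝ) < (Real.exp s * Real.cosh (c / 2)) ^ 2 - 1 := by nlinarith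
  have hsq : 0 < Real.sqrt ((Real.exp s * Real.cosh (c / 2)) ^ 2 - 1) := Real.sqrt_pos.2 hs
  have h5 := Real.sq_sqrt hs.le
  rw [sinh_hexLen h, cosh_hexLen h, div_eq_mul_inv]
  field_simp
  rw [mul_div_assoc, div_self (by rw [← mul_pow]; exact hsq.ne')]; ring



lemma theta_hasFDerivAt {X Y Z : ℝ × ℝ × ℝ → ℝ} {Lx Ly Lz : (ℝ × ℝ × ℝ) →L[ℝ] ℝ}
    {p : ℝ × ℝ × ℝ}
    (hX : HasFDerivAt X Lx p) (hY : HasFDerivAt Y Ly p) (hZ : HasFDerivAt Z Lz p)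
    (hx : 0 < X p) (hy : 0 < Y p) (hz : 0 < Z p) (N : ℝ)
    (hN : N = Real.cosh (X p) ^ 2 + Real.cosh (Y p) ^ 2 + Real.cosh (Z p) ^ 2 +
      2 * Real.cosh (X p) * Real.cosh (Y p) * Real.cosh (Z p) - 1) :
    HasFDerivAt (fun q => theta (X q) (Y q) (Z q))
      ((Real.sinh (X p) / Real.sqrt N) • Lx
        - ((Real.cosh (Z p) + Real.cosh (X p) * Real.cosh (Y p)) /
            (Real.sqrt N * Real.sinh (Y p))) • Ly
        - ((Real.cosh (Y p) + Real.cosh (X p) * Real.cosh (Z p)) /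
            (Real.sqrt N * Real.sinh (Z p))) • Lz) p := by
  have hsy : 0 < Real.sinh (Y p) := Real.sinh_pos_iff.2 hy
  have hsz : 0 < Real.sinh (Z p) := Real.sinh_pos_iff.2 hz
  have hcx : 1 < Real.cosh (X p) := Real.one_lt_cosh.2 hx.ne'
  have hcy1 : 1 ≤ Real.cosh (Y p) := Real.one_le_cosh _
  have hcz1 : 1 ≤ Real.cosh (Z p) := Real.one_le_cosh _
  have hDpos : 0 < Real.sinh (Y p) * Real.sinh (Z p) := mul_pos hsy hsz
  have hsub : Real.cosh (Y p) * Real.cosh (Z p) - Real.sinh (Y p) * Real.sinh (Z p)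
      = Real.cosh (Y p - Z p) := (Real.cosh_sub _ _).symm
  have hsub1 : 1 ≤ Real.cosh (Y p - Z p) := Real.one_le_cosh _
  have hNuD : Real.sinh (Y p) * Real.sinh (Z p) <
      Real.cosh (X p) + Real.cosh (Y p) * Real.cosh (Z p) := by nlinarith
  have hT : 1 < (Real.cosh (X p) + Real.cosh (Y p) * Real.cosh (Z p)) *
      (Real.sinh (Y p) * Real.sinh (Z p))⁻¹ := by
    rw [← div_eq_mul_inv]
    exact (one_lt_div hDpos).2 hNuD
  have hNpos : 0 < N := by rw [hN]; nlinarith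
  have hsN : 0 < Real.sqrt N := Real.sqrt_pos.2 hNpos
  have hy2 : Real.sinh (Y p) ^ 2 = Real.cosh (Y p) ^ 2 - 1 := by
    have := Real.cosh_sq_sub_sinh_sq (Y p); linarith
  have hz2 : Real.sinh (Z p) ^ 2 = Real.cosh (Z p) ^ 2 - 1 := by
    have := Real.cosh_sq_sub_sinh_sq (Z p); linarith
  have hTsq : ((Real.cosh (X p) + Real.cosh (Y p) * Real.cosh (Z p)) *
      (Real.sinh (Y p) * Real.sinh (Z p))⁻¹) ^ 2 - 1
      = N / (Real.sinh (Y p) * Real.sinh (Z p)) ^ 2 := by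
    rw [hN]
    field_simp
    linear_combination (-Real.sinh (Z p) ^ 2) * hy2 - (Real.cosh (Y p) ^ 2 - 1) * hz2
  have hsqrt : Real.sqrt (((Real.cosh (X p) + Real.cosh (Y p) * Real.cosh (Z p)) *
      (Real.sinh (Y p) * Real.sinh (Z p))⁻¹) ^ 2 - 1)
      = Real.sqrt N / (Real.sinh (Y p) * Real.sinh (Z p)) := by
    rw [hTsq, Real.sqrt_div hNpos.le, Real.sqrt_sq hDpos.le]
  have hcX : HasFDerivAt (fun q => Real.cosh (X q)) (Real.sinh (X p) • Lx) p := by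
    simpa [Function.comp_def] using (Real.hasDerivAt_cosh (X p)).comp_hasFDerivAt p hX
  have hcY : HasFDerivAt (fun q => Real.cosh (Y q)) (Real.sinh (Y p) • Ly) p := by
    simpa [Function.comp_def] using (Real.hasDerivAt_cosh (Y p)).comp_hasFDerivAt p hY
  have hcZ : HasFDerivAt (fun q => Real.cosh (Z q)) (Real.sinh (Z p) • Lz) p := by
    simpa [Function.comp_def] using (Real.hasDerivAt_cosh (Z p)).comp_hasFDerivAt p hZ
  have hsY : HasFDerivAt (fun q => Real.sinh (Y q)) (Real.cosh (Y p) • Ly) p := by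
    simpa [Function.comp_def] using (Real.hasDerivAt_sinh (Y p)).comp_hasFDerivAt p hY
  have hsZ : HasFDerivAt (fun q => Real.sinh (Z q)) (Real.cosh (Z p) • Lz) p := by
    simpa [Function.comp_def] using (Real.hasDerivAt_sinh (Z p)).comp_hasFDerivAt p hZ
  have hNum := hcX.add (hcY.mul hcZ)
  have hDen := hsY.mul hsZ
  have hInv := (hasDerivAt_inv hDpos.ne').comp_hasFDerivAt p hDen
  have hQ : HasFDerivAt (fun q => (Real.cosh (X q) + Real.cosh (Y q) * Real.cosh (Z q)) *
      (Real.sinh (Y q) * Real.sinh (Z q))⁻¹)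
      ((Real.sinh (X p) / (Real.sinh (Y p) * Real.sinh (Z p))) • Lx
        + ((Real.sinh (Y p) ^ 2 * Real.cosh (Z p) -
            (Real.cosh (X p) + Real.cosh (Y p) * Real.cosh (Z p)) * Real.cosh (Y p)) /
            (Real.sinh (Y p) ^ 2 * Real.sinh (Z p))) • Ly
        + ((Real.sinh (Z p) ^ 2 * Real.cosh (Y p) -
            (Real.cosh (X p) + Real.cosh (Y p) * Real.cosh (Z p)) * Real.cosh (Z p)) /
            (Real.sinh (Y p) * Real.sinh (Z p) ^ 2)) • Lz) p := by
    have hInv' := hInv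
    simp only [Function.comp_def] at hInv'
    refine (hNum.mul hInv').congr_fderiv ?_
    refine ContinuousLinearMap.ext fun v => ?_
    simp only [ContinuousLinearMap.add_apply, ContinuousLinearMap.smul_apply,
      ContinuousLinearMap.neg_apply, smul_eq_mul, Pi.add_apply, Pi.mul_apply]
    field_simp
    ring
  have harc := (hasDerivAt_arcosh hT).comp_hasFDerivAt p hQ
  have hfun : (fun q => theta (X q) (Y q) (Z q)) = _root_.arcosh ∘
      (fun q => (Real.cosh (X q) + Real.cosh (Y q) * Real.cosh (Z q)) *
        (Real.sinh (Y q) * Real.sinh (Z q))⁻¹) := by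
    funext q; simp [theta, Function.comp_def, div_eq_mul_inv]
  rw [hfun]
  refine harc.congr_fderiv ?_
  refine ContinuousLinearMap.ext fun v => ?_
  simp only [ContinuousLinearMap.sub_apply, ContinuousLinearMap.add_apply,
    ContinuousLinearMap.smul_apply, ContinuousLinearMap.neg_apply, smul_eq_mul,
    Function.comp_apply]
  rw [hsqrt, inv_div]
  have eY : Real.sinh (Y p) ^ 2 * Real.cosh (Z p) -
      (Real.cosh (X p) + Real.cosh (Y p) * Real.cosh (Z p)) * Real.cosh (Y p)
      = -(Real.cosh (Z p) + Real.cosh (X p) * Real.cosh (Y p)) := by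
    linear_combination Real.cosh (Z p) * hy2
  have eZ : Real.sinh (Z p) ^ 2 * Real.cosh (Y p) -
      (Real.cosh (X p) + Real.cosh (Y p) * Real.cosh (Z p)) * Real.cosh (Z p)
      = -(Real.cosh (Y p) + Real.cosh (X p) * Real.cosh (Z p)) := by
    linear_combination Real.cosh (Y p) * hz2
  rw [eY, eZ]
  field_simp
  ring

def pi1 : (ℝ × ℝ × ℝ) →L[ℝ] ℝ := ContinuousLinearMap.fst ℝ ℝ (ℝ × ℝ)
def pi2 : (ℝ × ℝ × ℝ) →L[ℝ] ℝ :=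
  (ContinuousLinearMap.fst ℝ ℝ ℝ).comp (ContinuousLinearMap.snd ℝ ℝ (ℝ × ℝ))
def pi3 : (ℝ × ℝ × ℝ) →L[ℝ] ℝ :=
  (ContinuousLinearMap.snd ℝ ℝ ℝ).comp (ContinuousLinearMap.snd ℝ ℝ (ℝ × ℝ))

@[simp] lemma pi1_apply (v : ℝ × ℝ × ℝ) : pi1 v = v.1 := rfl
@[simp] lemma pi2_apply (v : ℝ × ℝ × ℝ) : pi2 v = v.2.1 := rfl
@[simp] lemma pi3_apply (v : ℝ × ℝ × ℝ) : pi3 v = v.2.2 := rfl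

end Stmt4Aux

set_option maxHeartbeats 2000000

/-- Lemma 2.3: at every point of `W^{ijk}` the functions
`θ^i_jk, θ^j_ki, θ^k_ij` are differentiable and their Jacobian matrix in
`(w_i, w_j, w_k)` is symmetric:
`∂θ^i_jk/∂w_j = ∂θ^j_ki/∂w_i`, `∂θ^j_ki/∂w_k = ∂θ^k_ij/∂w_j`,
`∂θ^k_ij/∂w_i = ∂θ^i_jk/∂w_k`. -/


theorem stmt_4 (a b c : ℝ) (ha : 0 < a) (hb : 0 < b) (hc : 0 < c)
    (p : ℝ × ℝ × ℝ) (hp : p ∈ Wijk a b c) :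
    DifferentiableAt ℝ (thetaI a b c) p ∧
    DifferentiableAt ℝ (thetaJ a b c) p ∧
    DifferentiableAt ℝ (thetaK a b c) p ∧
    fderiv ℝ (thetaI a b c) p (0, 1, 0) = fderiv ℝ (thetaJ a b c) p (1, 0, 0) ∧
    fderiv ℝ (thetaJ a b c) p (0, 0, 1) = fderiv ℝ (thetaK a b c) p (0, 1, 0) ∧
    fderiv ℝ (thetaK a b c) p (1, 0, 0) = fderiv ℝ (thetaI a b c) p (0, 0, 1) := by
  obtain ⟨h1, h2, h3⟩ := hp
  obtain ⟨Da, hDadef⟩ : ∃ d : ℝ, d = (2 * (Real.exp (p.2.1 + p.2.2) * Real.cosh (a / 2)) / Real.sqrt ((Real.exp (p.2.1 + p.2.2) * Real.cosh (a / 2)) ^ 2 - 1)) := ⟨_, rfl⟩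
  obtain ⟨Db, hDbdef⟩ : ∃ d : ℝ, d = (2 * (Real.exp (p.2.2 + p.1) * Real.cosh (b / 2)) / Real.sqrt ((Real.exp (p.2.2 + p.1) * Real.cosh (b / 2)) ^ 2 - 1)) := ⟨_, rfl⟩
  obtain ⟨Dc, hDcdef⟩ : ∃ d : ℝ, d = (2 * (Real.exp (p.1 + p.2.1) * Real.cosh (c / 2)) / Real.sqrt ((Real.exp (p.1 + p.2.1) * Real.cosh (c / 2)) ^ 2 - 1)) := ⟨_, rfl⟩
  obtain ⟨M, hMdef⟩ : ∃ m : ℝ, m = Real.sqrt (Real.cosh (hexLen a (p.2.1 + p.2.2)) ^ 2 + Real.cosh (hexLen b (p.2.2 + p.1)) ^ 2 + Real.cosh (hexLen c (p.1 + p.2.1)) ^ 2 + 2 * Real.cosh (hexLen a (p.2.1 + p.2.2)) * Real.cosh (hexLen b (p.2.2 + p.1)) * Real.cosh (hexLen c (p.1 + p.2.1)) - 1) := ⟨_, rfl⟩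
  have hxpos : 0 < (hexLen a (p.2.1 + p.2.2)) := Stmt4Aux.hexLen_pos h1
  have hypos : 0 < (hexLen b (p.2.2 + p.1)) := Stmt4Aux.hexLen_pos h2
  have hzpos : 0 < (hexLen c (p.1 + p.2.1)) := Stmt4Aux.hexLen_pos h3
  have hsx : 0 < Real.sinh (hexLen a (p.2.1 + p.2.2)) := Real.sinh_pos_iff.2 hxpos
  have hsy : 0 < Real.sinh (hexLen b (p.2.2 + p.1)) := Real.sinh_pos_iff.2 hypos
  have hsz : 0 < Real.sinh (hexLen c (p.1 + p.2.1)) := Real.sinh_pos_iff.2 hzpos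
  have hx2 : Real.sinh (hexLen a (p.2.1 + p.2.2)) ^ 2 = Real.cosh (hexLen a (p.2.1 + p.2.2)) ^ 2 - 1 := by
    have := Real.cosh_sq_sub_sinh_sq (hexLen a (p.2.1 + p.2.2)); linarith
  have hy2 : Real.sinh (hexLen b (p.2.2 + p.1)) ^ 2 = Real.cosh (hexLen b (p.2.2 + p.1)) ^ 2 - 1 := by
    have := Real.cosh_sq_sub_sinh_sq (hexLen b (p.2.2 + p.1)); linarith
  have hz2 : Real.sinh (hexLen c (p.1 + p.2.1)) ^ 2 = Real.cosh (hexLen c (p.1 + p.2.1)) ^ 2 - 1 := by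
    have := Real.cosh_sq_sub_sinh_sq (hexLen c (p.1 + p.2.1)); linarith
  have Ka : Real.sinh (hexLen a (p.2.1 + p.2.2)) * Da = 2 * (Real.cosh (hexLen a (p.2.1 + p.2.2)) + 1) := by rw [hDadef]; exact Stmt4Aux.hex_key h1
  have Kb : Real.sinh (hexLen b (p.2.2 + p.1)) * Db = 2 * (Real.cosh (hexLen b (p.2.2 + p.1)) + 1) := by rw [hDbdef]; exact Stmt4Aux.hex_key h2
  have Kc : Real.sinh (hexLen c (p.1 + p.2.1)) * Dc = 2 * (Real.cosh (hexLen c (p.1 + p.2.1)) + 1) := by rw [hDcdef]; exact Stmt4Aux.hex_key h3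
  have h1a : (1 - Real.cosh (hexLen a (p.2.1 + p.2.2))) * Da = -2 * Real.sinh (hexLen a (p.2.1 + p.2.2)) := by
    apply mul_right_cancel₀ hsx.ne'
    linear_combination (1 - Real.cosh (hexLen a (p.2.1 + p.2.2))) * Ka + 2 * hx2
  have h1b : (1 - Real.cosh (hexLen b (p.2.2 + p.1))) * Db = -2 * Real.sinh (hexLen b (p.2.2 + p.1)) := by
    apply mul_right_cancel₀ hsy.ne'
    linear_combination (1 - Real.cosh (hexLen b (p.2.2 + p.1))) * Kb + 2 * hy2
  have h1c : (1 - Real.cosh (hexLen c (p.1 + p.2.1))) * Dc = -2 * Real.sinh (hexLen c (p.1 + p.2.1)) := by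
    apply mul_right_cancel₀ hsz.ne'
    linear_combination (1 - Real.cosh (hexLen c (p.1 + p.2.1))) * Kc + 2 * hz2
  have hNpos : 0 < (Real.cosh (hexLen a (p.2.1 + p.2.2)) ^ 2 + Real.cosh (hexLen b (p.2.2 + p.1)) ^ 2 + Real.cosh (hexLen c (p.1 + p.2.1)) ^ 2 + 2 * Real.cosh (hexLen a (p.2.1 + p.2.2)) * Real.cosh (hexLen b (p.2.2 + p.1)) * Real.cosh (hexLen c (p.1 + p.2.1)) - 1) := by
    have u1 := Real.one_le_cosh (hexLen a (p.2.1 + p.2.2))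
    have u2 := Real.one_le_cosh (hexLen b (p.2.2 + p.1))
    have u3 := Real.one_le_cosh (hexLen c (p.1 + p.2.1))
    have u4 : 1 ≤ Real.cosh (hexLen a (p.2.1 + p.2.2)) * Real.cosh (hexLen b (p.2.2 + p.1)) := by nlinarith
    have u5 : 1 ≤ Real.cosh (hexLen a (p.2.1 + p.2.2)) * Real.cosh (hexLen b (p.2.2 + p.1)) * Real.cosh (hexLen c (p.1 + p.2.1)) := by nlinarith
    nlinarith
  have hM : 0 < M := by rw [hMdef]; exact Real.sqrt_pos.2 hNpos
  have hLa : HasFDerivAt (fun q : ℝ × ℝ × ℝ => q.2.1 + q.2.2)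
      (Stmt4Aux.pi2 + Stmt4Aux.pi3) p := (Stmt4Aux.pi2 + Stmt4Aux.pi3).hasFDerivAt
  have hLb : HasFDerivAt (fun q : ℝ × ℝ × ℝ => q.2.2 + q.1)
      (Stmt4Aux.pi3 + Stmt4Aux.pi1) p := (Stmt4Aux.pi3 + Stmt4Aux.pi1).hasFDerivAt
  have hLc : HasFDerivAt (fun q : ℝ × ℝ × ℝ => q.1 + q.2.1)
      (Stmt4Aux.pi1 + Stmt4Aux.pi2) p := (Stmt4Aux.pi1 + Stmt4Aux.pi2).hasFDerivAt
  have hA : HasFDerivAt (fun q : ℝ × ℝ × ℝ => hexLen a (q.2.1 + q.2.2))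
      (Da • (Stmt4Aux.pi2 + Stmt4Aux.pi3)) p := by
    rw [hDadef]; exact (Stmt4Aux.hasDerivAt_hexLen h1).comp_hasFDerivAt (f := fun q : ℝ × ℝ × ℝ => q.2.1 + q.2.2) p hLa
  have hB : HasFDerivAt (fun q : ℝ × ℝ × ℝ => hexLen b (q.2.2 + q.1))
      (Db • (Stmt4Aux.pi3 + Stmt4Aux.pi1)) p := by
    rw [hDbdef]; exact (Stmt4Aux.hasDerivAt_hexLen h2).comp_hasFDerivAt (f := fun q : ℝ × ℝ × ℝ => q.2.2 + q.1) p hLb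
  have hC : HasFDerivAt (fun q : ℝ × ℝ × ℝ => hexLen c (q.1 + q.2.1))
      (Dc • (Stmt4Aux.pi1 + Stmt4Aux.pi2)) p := by
    rw [hDcdef]; exact (Stmt4Aux.hasDerivAt_hexLen h3).comp_hasFDerivAt (f := fun q : ℝ × ℝ × ℝ => q.1 + q.2.1) p hLc
  have hI : HasFDerivAt (thetaI a b c)
      ((Real.sinh (hexLen a (p.2.1 + p.2.2)) / M) • (Da • (Stmt4Aux.pi2 + Stmt4Aux.pi3))
        - ((Real.cosh (hexLen c (p.1 + p.2.1)) + Real.cosh (hexLen a (p.2.1 + p.2.2)) * Real.cosh (hexLen b (p.2.2 + p.1))) / (M * Real.sinh (hexLen b (p.2.2 + p.1)))) • (Db • (Stmt4Aux.pi3 + Stmt4Aux.pi1))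
        - ((Real.cosh (hexLen b (p.2.2 + p.1)) + Real.cosh (hexLen a (p.2.1 + p.2.2)) * Real.cosh (hexLen c (p.1 + p.2.1))) / (M * Real.sinh (hexLen c (p.1 + p.2.1)))) • (Dc • (Stmt4Aux.pi1 + Stmt4Aux.pi2))) p := by
    rw [hMdef]
    exact Stmt4Aux.theta_hasFDerivAt hA hB hC hxpos hypos hzpos _ rfl
  have hJ : HasFDerivAt (thetaJ a b c)
      ((Real.sinh (hexLen b (p.2.2 + p.1)) / M) • (Db • (Stmt4Aux.pi3 + Stmt4Aux.pi1))
        - ((Real.cosh (hexLen a (p.2.1 + p.2.2)) + Real.cosh (hexLen b (p.2.2 + p.1)) * Real.cosh (hexLen c (p.1 + p.2.1))) / (M * Real.sinh (hexLen c (p.1 + p.2.1)))) • (Dc • (Stmt4Aux.pi1 + Stmt4Aux.pi2))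
        - ((Real.cosh (hexLen c (p.1 + p.2.1)) + Real.cosh (hexLen b (p.2.2 + p.1)) * Real.cosh (hexLen a (p.2.1 + p.2.2))) / (M * Real.sinh (hexLen a (p.2.1 + p.2.2)))) • (Da • (Stmt4Aux.pi2 + Stmt4Aux.pi3))) p := by
    rw [hMdef]
    exact Stmt4Aux.theta_hasFDerivAt hB hC hA hypos hzpos hxpos _ (by ring)
  have hK : HasFDerivAt (thetaK a b c)
      ((Real.sinh (hexLen c (p.1 + p.2.1)) / M) • (Dc • (Stmt4Aux.pi1 + Stmt4Aux.pi2))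
        - ((Real.cosh (hexLen b (p.2.2 + p.1)) + Real.cosh (hexLen c (p.1 + p.2.1)) * Real.cosh (hexLen a (p.2.1 + p.2.2))) / (M * Real.sinh (hexLen a (p.2.1 + p.2.2)))) • (Da • (Stmt4Aux.pi2 + Stmt4Aux.pi3))
        - ((Real.cosh (hexLen a (p.2.1 + p.2.2)) + Real.cosh (hexLen c (p.1 + p.2.1)) * Real.cosh (hexLen b (p.2.2 + p.1))) / (M * Real.sinh (hexLen b (p.2.2 + p.1)))) • (Db • (Stmt4Aux.pi3 + Stmt4Aux.pi1))) p := by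
    rw [hMdef]
    exact Stmt4Aux.theta_hasFDerivAt hC hA hB hzpos hxpos hypos _ (by ring)
  refine ⟨hI.differentiableAt, hJ.differentiableAt, hK.differentiableAt, ?_, ?_, ?_⟩
  · rw [hI.fderiv, hJ.fderiv]
    have main1 : Real.sinh (hexLen a (p.2.1 + p.2.2)) * Da * Real.sinh (hexLen c (p.1 + p.2.1)) - (Real.cosh (hexLen b (p.2.2 + p.1)) + Real.cosh (hexLen a (p.2.1 + p.2.2)) * Real.cosh (hexLen c (p.1 + p.2.1))) * Dc
        = Real.sinh (hexLen b (p.2.2 + p.1)) * Db * Real.sinh (hexLen c (p.1 + p.2.1)) - (Real.cosh (hexLen a (p.2.1 + p.2.2)) + Real.cosh (hexLen b (p.2.2 + p.1)) * Real.cosh (hexLen c (p.1 + p.2.1))) * Dc := by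
      linear_combination Real.sinh (hexLen c (p.1 + p.2.1)) * Ka - Real.sinh (hexLen c (p.1 + p.2.1)) * Kb + (Real.cosh (hexLen a (p.2.1 + p.2.2)) - Real.cosh (hexLen b (p.2.2 + p.1))) * h1c
    simp only [ContinuousLinearMap.sub_apply, ContinuousLinearMap.add_apply,
      ContinuousLinearMap.smul_apply, smul_eq_mul, Stmt4Aux.pi1_apply, Stmt4Aux.pi2_apply,
      Stmt4Aux.pi3_apply]
    norm_num
    field_simp
    linear_combination main1
  · rw [hJ.fderiv, hK.fderiv]
    have main2 : Real.sinh (hexLen b (p.2.2 + p.1)) * Db * Real.sinh (hexLen a (p.2.1 + p.2.2)) - (Real.cosh (hexLen c (p.1 + p.2.1)) + Real.cosh (hexLen b (p.2.2 + p.1)) * Real.cosh (hexLen a (p.2.1 + p.2.2))) * Da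
        = Real.sinh (hexLen c (p.1 + p.2.1)) * Dc * Real.sinh (hexLen a (p.2.1 + p.2.2)) - (Real.cosh (hexLen b (p.2.2 + p.1)) + Real.cosh (hexLen c (p.1 + p.2.1)) * Real.cosh (hexLen a (p.2.1 + p.2.2))) * Da := by
      linear_combination Real.sinh (hexLen a (p.2.1 + p.2.2)) * Kb - Real.sinh (hexLen a (p.2.1 + p.2.2)) * Kc + (Real.cosh (hexLen b (p.2.2 + p.1)) - Real.cosh (hexLen c (p.1 + p.2.1))) * h1a
    simp only [ContinuousLinearMap.sub_apply, ContinuousLinearMap.add_apply,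
      ContinuousLinearMap.smul_apply, smul_eq_mul, Stmt4Aux.pi1_apply, Stmt4Aux.pi2_apply,
      Stmt4Aux.pi3_apply]
    norm_num
    field_simp
    linear_combination main2
  · rw [hK.fderiv, hI.fderiv]
    have main3 : Real.sinh (hexLen c (p.1 + p.2.1)) * Dc * Real.sinh (hexLen b (p.2.2 + p.1)) - (Real.cosh (hexLen a (p.2.1 + p.2.2)) + Real.cosh (hexLen c (p.1 + p.2.1)) * Real.cosh (hexLen b (p.2.2 + p.1))) * Db
        = Real.sinh (hexLen a (p.2.1 + p.2.2)) * Da * Real.sinh (hexLen b (p.2.2 + p.1)) - (Real.cosh (hexLen c (p.1 + p.2.1)) + Real.cosh (hexLen a (p.2.1 + p.2.2)) * Real.cosh (hexLen b (p.2.2 + p.1))) * Db := by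
      linear_combination Real.sinh (hexLen b (p.2.2 + p.1)) * Kc - Real.sinh (hexLen b (p.2.2 + p.1)) * Ka + (Real.cosh (hexLen c (p.1 + p.2.1)) - Real.cosh (hexLen a (p.2.1 + p.2.2))) * h1b
    simp only [ContinuousLinearMap.sub_apply, ContinuousLinearMap.add_apply,
      ContinuousLinearMap.smul_apply, smul_eq_mul, Stmt4Aux.pi1_apply, Stmt4Aux.pi2_apply,
      Stmt4Aux.pi3_apply]
    norm_num
    field_simp
    linear_combination main3
end

section
/- For all real numbers a, b, c > 1, the symmetric 3×3 matrix M(a,b,c) with entries M₁₁ = (c+ab)/(b−1) + (b+ac)/(c−1), M₁₂ = M₂₁ = (a+b−c+1)/(c−1), M₁₃ = M₃₁ = (a+c−b+1)/(b−1), M₂₂ = (c+ab)/(a−1) + (a+bc)/(c−1), M₂₃ = M₃₂ = (b+c−a+1)/(a−1), M₃₃ = (b+ac)/(a−1) + (a+bc)/(b−1), is positive definite. In particular M₁₁ > 0, M₁₁M₂₂ − M₁₂M₂₁ > 0, and det M(a,b,c) > 0. -/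
open Real

/-- The symmetric matrix `M(a,b,c)` from the proof of Lemma 2.3. -/
noncomputable def Mmat (a b c : ℝ) : Matrix (Fin 3) (Fin 3) ℝ :=
  !![(c + a * b) / (b - 1) + (b + a * c) / (c - 1),
       (a + b - c + 1) / (c - 1), (a + c - b + 1) / (b - 1);
     (a + b - c + 1) / (c - 1),
       (c + a * b) / (a - 1) + (a + b * c) / (c - 1), (b + c - a + 1) / (a - 1);
     (a + c - b + 1) / (b - 1), (b + c - a + 1) / (a - 1),
       (b + a * c) / (a - 1) + (a + b * c) / (b - 1)]

private lemma disc_lt (x y z : ℝ) (hx : 1 < x) (hy : 1 < y) (hz : 1 < z) :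
    (x + y - z + 1) ^ 2 < (y + x * z) * (x + y * z) := by
  have key : (y + x * z) * (x + y * z) - (x + y - z + 1) ^ 2
      = (z - 1) * ((x + y) * (x + y + 2)) + (z - 1) * ((z - 1) * (x * y - 1)) := by ring
  have h1 : 0 < (z - 1) * ((x + y) * (x + y + 2)) :=
    mul_pos (by linarith) (mul_pos (by linarith) (by linarith))
  have h2 : 0 ≤ (z - 1) * ((z - 1) * (x * y - 1)) :=
    mul_nonneg (by linarith) (mul_nonneg (by linarith) (by nlinarith))
  linarith

private lemma quad_nonneg (P Q R u v : ℝ) (hQ : 0 < Q) (hD : P ^ 2 < Q * R) :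
    0 ≤ Q * u ^ 2 + 2 * P * u * v + R * v ^ 2 := by
  nlinarith [sq_nonneg (Q * u + P * v), sq_nonneg v, mul_pos hQ hQ]

private lemma quad_pos (P Q R u v : ℝ) (hQ : 0 < Q) (hD : P ^ 2 < Q * R)
    (h : u ≠ 0 ∨ v ≠ 0) : 0 < Q * u ^ 2 + 2 * P * u * v + R * v ^ 2 := by
  rcases eq_or_ne v 0 with hv | hv
  · have hu : u ≠ 0 := by rcases h with h | h; exact h; exact absurd hv h
    subst hv
    have : 0 < u ^ 2 := by positivity
    nlinarith [mul_pos hQ this]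
  · have h1 : 0 < (Q * R - P ^ 2) * v ^ 2 := by
      have : 0 < v ^ 2 := by positivity
      nlinarith
    nlinarith [sq_nonneg (Q * u + P * v)]

set_option maxHeartbeats 1000000 in
/-- for all `a, b, c > 1` the symmetric matrix `M(a,b,c)` is positive
definite; in particular `M₁₁ > 0`, `M₁₁M₂₂ − M₁₂M₂₁ > 0`, and `det M > 0`. -/
theorem stmt_7 (a b c : ℝ) (ha : 1 < a) (hb : 1 < b) (hc : 1 < c) :
    (Mmat a b c).PosDef ∧
    0 < Mmat a b c 0 0 ∧
    0 < Mmat a b c 0 0 * Mmat a b c 1 1 - Mmat a b c 0 1 * Mmat a b c 1 0 ∧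
    0 < (Mmat a b c).det := by
  have ha0 : (0:ℝ) < a - 1 := by linarith
  have hb0 : (0:ℝ) < b - 1 := by linarith
  have hc0 : (0:ℝ) < c - 1 := by linarith
  -- discriminant facts for the three 2×2 blocks
  have Dc := disc_lt a b c ha hb hc      -- (a+b-c+1)² < (b+ac)(a+bc)
  have Db : (a + c - b + 1) ^ 2 < (c + a * b) * (a + b * c) := by
    have h := disc_lt a c b ha hc hb
    have e : (c + a * b) * (a + c * b) = (c + a * b) * (a + b * c) := by ring
    rw [e] at h; exact h
  have Da : (b + c - a + 1) ^ 2 < (c + a * b) * (b + a * c) := by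
    have h := disc_lt b c a hb hc ha
    have e : (c + b * a) * (b + c * a) = (c + a * b) * (b + a * c) := by ring
    rw [e] at h; exact h
  have hQc : (0:ℝ) < b + a * c := by nlinarith
  have hQb : (0:ℝ) < c + a * b := by nlinarith
  have hQa : (0:ℝ) < c + a * b := hQb
  have hPD : (Mmat a b c).PosDef := by
    rw [Matrix.posDef_iff_dotProduct_mulVec]
    constructor
    · ext i j
      fin_cases i <;> fin_cases j <;>
        simp [Mmat, Matrix.conjTranspose_apply]
    · intro x hx
      have hx' : x 0 ≠ 0 ∨ x 1 ≠ 0 ∨ x 2 ≠ 0 := by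
        by_contra h
        push_neg at h
        exact hx (funext fun i => by fin_cases i <;> simp [h.1, h.2.1, h.2.2])
      set u := x 0 with hu
      set v := x 1 with hv
      set w := x 2 with hw
      have hform : dotProduct (star x) ((Mmat a b c).mulVec x) =
          ((c + a * b) * v ^ 2 + 2 * (b + c - a + 1) * v * w + (b + a * c) * w ^ 2) / (a - 1)
          + ((c + a * b) * u ^ 2 + 2 * (a + c - b + 1) * u * w + (a + b * c) * w ^ 2) / (b - 1)
          + ((b + a * c) * u ^ 2 + 2 * (a + b - c + 1) * u * v + (a + b * c) * v ^ 2) / (c - 1) := by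
        simp [Mmat, Matrix.mulVec, dotProduct, Fin.sum_univ_three, ← hu, ← hv, ← hw]
        field_simp
        ring
      rw [hform]
      have nna : 0 ≤ ((c + a * b) * v ^ 2 + 2 * (b + c - a + 1) * v * w + (b + a * c) * w ^ 2) / (a - 1) :=
        div_nonneg (quad_nonneg _ _ _ _ _ hQa Da) ha0.le
      have nnb : 0 ≤ ((c + a * b) * u ^ 2 + 2 * (a + c - b + 1) * u * w + (a + b * c) * w ^ 2) / (b - 1) :=
        div_nonneg (quad_nonneg _ _ _ _ _ hQb Db) hb0.le
      have nnc : 0 ≤ ((b + a * c) * u ^ 2 + 2 * (a + b - c + 1) * u * v + (a + b * c) * v ^ 2) / (c - 1) :=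
        div_nonneg (quad_nonneg _ _ _ _ _ hQc Dc) hc0.le
      rcases hx' with h | h | h
      · have := div_pos (quad_pos _ _ _ u v hQc Dc (Or.inl h)) hc0
        linarith
      · have := div_pos (quad_pos _ _ _ u v hQc Dc (Or.inr h)) hc0
        linarith
      · have := div_pos (quad_pos _ _ _ u w hQb Db (Or.inr h)) hb0
        linarith
  have hm00 : 0 < Mmat a b c 0 0 := by
    have : Mmat a b c 0 0 = (c + a * b) / (b - 1) + (b + a * c) / (c - 1) := by simp [Mmat]
    rw [this]
    have := div_pos hQb hb0
    have := div_pos hQc hc0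
    linarith
  refine ⟨hPD, hm00, ?_, hPD.det_pos⟩
  -- 2×2 leading principal minor via the PD property
  set m00 := Mmat a b c 0 0 with hm0
  set m01 := Mmat a b c 0 1 with hm1
  set m10 := Mmat a b c 1 0 with hm2
  set m11 := Mmat a b c 1 1 with hm3
  have hsym : m10 = m01 := by simp [hm1, hm2, Mmat]
  have hv : (![m01, -m00, 0] : Fin 3 → ℝ) ≠ 0 := by
    intro h
    have := congrFun h 1
    simp at this
    exact absurd this (by linarith)
  have h2 := (Matrix.posDef_iff_dotProduct_mulVec.mp hPD).2 (x := ![m01, -m00, 0]) hv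
  have hform2 : dotProduct (star (![m01, -m00, 0] : Fin 3 → ℝ)) ((Mmat a b c).mulVec ![m01, -m00, 0])
      = m00 * (m00 * m11 - m01 * m10) := by
    simp [Matrix.mulVec, dotProduct, Fin.sum_univ_three, ← hm0, ← hm1, ← hm2, ← hm3, hsym]
    ring
  rw [hform2] at h2
  by_contra h
  push_neg at h
  nlinarith
end
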